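/- arXiv:2401.15813 — 2 statements merged into one kernel-verified Lean document; each statement's English description precedes it below -/
import Mathlib

section
/- The Vecchia score function is unbiased: for a parametrized family of positive-definite covariance matrices K(θ) depending differentiably on a scalar parameter θ, define the Vecchia log-likelihood ℓ̂(y; θ) = Σ_{i=1}^n log p_θ(y_i | y_{g(i)}), where each conditional density is the Gaussian conditional of N(0, K(θ)) given the variables indexed by g(i) ⊆ {1,...,i-1}. Then E_θ[∂ℓ̂(y; θ)/∂θ] = 0, where the expectation is taken under y ~ N(0, K(θ)). -/
open MeasureTheory Matrix Real

lemma sum_dite_mul {n : ℕ} (S : Finset (Fin n)) (gg : {a // a ∈ S} → ℝ) (f : Fin n → ℝ) :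
    ∑ l : Fin n, (if h : l ∈ S then gg ⟨l, h⟩ else 0) * f l = ∑ j : {a // a ∈ S}, gg j * f j := by
  classical
  have h1 : ∑ l : Fin n, (if h : l ∈ S then gg ⟨l, h⟩ else 0) * f l
      = ∑ l ∈ S, (if h : l ∈ S then gg ⟨l, h⟩ else 0) * f l := by
    refine (Finset.sum_subset S.subset_univ ?_).symm
    intro x _ hx
    rw [dif_neg hx, zero_mul]
  rw [h1, ← Finset.sum_coe_sort S (fun l => (if h : l ∈ S then gg ⟨l, h⟩ else 0) * f l)]
  apply Finset.sum_congr rfl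
  intro j _
  rw [dif_pos j.2]

lemma diff_det {m : Type*} [Fintype m] [DecidableEq m] (N : ℝ → Matrix m m ℝ)
    (h : ∀ p q, Differentiable ℝ fun θ => N θ p q) :
    Differentiable ℝ fun θ => (N θ).det := by
  simp only [Matrix.det_apply']
  apply Differentiable.fun_sum
  intro σ _
  exact (Differentiable.fun_finsetProd fun i _ => h _ _).const_mul _

lemma diff_adj {m : Type*} [Fintype m] [DecidableEq m] (N : ℝ → Matrix m m ℝ)
    (h : ∀ p q, Differentiable ℝ fun θ => N θ p q) (p q : m) :
    Differentiable ℝ fun θ => (N θ).adjugate p q := by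
  simp only [Matrix.adjugate_apply]
  apply diff_det
  intro a b
  by_cases hab : a = q
  · simp only [Matrix.updateRow_apply, hab, if_pos]
    exact differentiable_const _
  · simp only [Matrix.updateRow_apply, if_neg hab]
    exact h a b

lemma diff_inv_entry {m : Type*} [Fintype m] [DecidableEq m] (N : ℝ → Matrix m m ℝ)
    (h : ∀ p q, Differentiable ℝ fun θ => N θ p q) (θ₀ : ℝ) (hdet : (N θ₀).det ≠ 0) (p q : m) :
    DifferentiableAt ℝ (fun θ => (N θ)⁻¹ p q) θ₀ := by
  have he : ∀ θ, (N θ)⁻¹ p q = ((N θ).det)⁻¹ * (N θ).adjugate p q := by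
    intro θ
    rw [Matrix.inv_def, Ring.inverse_eq_inv', Matrix.smul_apply, smul_eq_mul]
  simp only [he]
  exact (((diff_det N h) θ₀).inv hdet).mul ((diff_adj N h p q) θ₀)

lemma posdef_sub {n : ℕ} (K : Matrix (Fin n) (Fin n) ℝ) (hK : K.PosDef) (S : Finset (Fin n)) :
    (Matrix.of fun p q : S => K p q).PosDef := by
  rw [Matrix.posDef_iff_dotProduct_mulVec]
  constructor
  · ext p q
    have h2 := congrFun (congrFun hK.isHermitian (p : Fin n)) (q : Fin n)
    simp only [Matrix.conjTranspose_apply, star_trivial, Matrix.of_apply] at h2 ⊢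
    exact h2
  · intro x hx
    set X : Fin n → ℝ := fun k => if h : k ∈ S then x ⟨k, h⟩ else 0 with hX
    have hXne : X ≠ 0 := by
      obtain ⟨j, hj⟩ := Function.ne_iff.mp hx
      intro hc
      apply hj
      have h3 := congrFun hc (j : Fin n)
      simp only [hX, dif_pos j.2, Subtype.coe_eta, Pi.zero_apply] at h3
      simpa using h3
    have hpos := (Matrix.posDef_iff_dotProduct_mulVec.mp hK).2 hXne
    have key : ∀ l : Fin n, ∑ q, K l q * X q = ∑ q : {a // a ∈ S}, K l q * x q := by
      intro l
      have h4 : ∑ q, K l q * X q = ∑ q : Fin n, (if h : q ∈ S then x ⟨q, h⟩ else 0) * K l q := by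
        exact Finset.sum_congr rfl fun q _ => mul_comm _ _
      rw [h4, sum_dite_mul]
      exact Finset.sum_congr rfl fun q _ => mul_comm _ _
    have heq : X ⬝ᵥ (K *ᵥ X) = x ⬝ᵥ ((Matrix.of fun p q : S => K p q) *ᵥ x) := by
      have e1 : X ⬝ᵥ (K *ᵥ X) = ∑ l, X l * ∑ q, K l q * X q := rfl
      have e2 : x ⬝ᵥ ((Matrix.of fun p q : S => K p q) *ᵥ x)
          = ∑ j : S, x j * ∑ q : S, K j q * x q := rfl
      rw [e1, e2]
      simp only [key]
      exact sum_dite_mul S x (fun l => ∑ q : S, K l q * x q)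
    rw [star_trivial, heq] at hpos
    exact hpos

lemma moment_lemma {Ω : Type*} [MeasurableSpace Ω] (μ : Measure Ω)
    {n : ℕ} (K0 : Matrix (Fin n) (Fin n) ℝ) (y : Ω → Fin n → ℝ)
    (hint2 : ∀ i j, Integrable (fun ω => y ω i * y ω j) μ)
    (hcov : ∀ i j, ∫ ω, y ω i * y ω j ∂μ = K0 i j) (v v' : Fin n → ℝ) :
    Integrable (fun ω => (v ⬝ᵥ y ω) * (v' ⬝ᵥ y ω)) μ ∧
      ∫ ω, (v ⬝ᵥ y ω) * (v' ⬝ᵥ y ω) ∂μ = v ⬝ᵥ (K0 *ᵥ v') := by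
  have hfun : ∀ z : Fin n → ℝ,
      (v ⬝ᵥ z) * (v' ⬝ᵥ z) = ∑ k, ∑ l, (v k * v' l) * (z k * z l) := by
    intro z
    simp only [dotProduct]
    rw [Finset.sum_mul_sum]
    exact Finset.sum_congr rfl fun k _ => Finset.sum_congr rfl fun l _ => by ring
  have hint : Integrable (fun ω => (v ⬝ᵥ y ω) * (v' ⬝ᵥ y ω)) μ := by
    simp only [hfun]
    exact integrable_finset_sum _ fun k _ =>
      integrable_finset_sum _ fun l _ => (hint2 k l).const_mul _
  refine ⟨hint, ?_⟩
  simp only [hfun]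
  rw [integral_finset_sum _ fun k _ => integrable_finset_sum _ fun l _ => (hint2 k l).const_mul _]
  have : ∀ k : Fin n, (∫ ω, ∑ l, (v k * v' l) * (y ω k * y ω l) ∂μ)
      = ∑ l, (v k * v' l) * K0 k l := by
    intro k
    rw [integral_finset_sum _ fun l _ => (hint2 k l).const_mul _]
    exact Finset.sum_congr rfl fun l _ => by rw [integral_const_mul, hcov]
  simp only [this]
  simp only [dotProduct, Matrix.mulVec, Finset.mul_sum]
  exact Finset.sum_congr rfl fun k _ => Finset.sum_congr rfl fun l _ => by ring

lemma vecchia_term {Ω : Type*} [MeasurableSpace Ω] (μ : Measure Ω) [IsProbabilityMeasure μ]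
    {n : ℕ} (K : ℝ → Matrix (Fin n) (Fin n) ℝ)
    (hKpd : ∀ θ, (K θ).PosDef)
    (hKdiff : ∀ i j, Differentiable ℝ (fun θ => K θ i j))
    (θ₀ : ℝ) (y : Ω → Fin n → ℝ)
    (hint2 : ∀ i j, Integrable (fun ω => y ω i * y ω j) μ)
    (hcov : ∀ i j, ∫ ω, y ω i * y ω j ∂μ = K θ₀ i j)
    (i : Fin n) (S : Finset (Fin n)) (hiS : i ∉ S)
    (σ2i : ℝ → ℝ)
    (hσ2i : ∀ θ, σ2i θ = K θ i i -
      (fun j : S => K θ i j) ⬝ᵥ ((Matrix.of fun p q : S => K θ p q)⁻¹ *ᵥ fun j : S => K θ j i))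
    (ui : ℝ → (Fin n → ℝ) → ℝ)
    (hui : ∀ θ z, ui θ z = z i -
      (fun j : S => K θ i j) ⬝ᵥ ((Matrix.of fun p q : S => K θ p q)⁻¹ *ᵥ fun j : S => z j)) :
    ∃ D : Ω → ℝ,
      (∀ ω, HasDerivAt (fun θ => -(1 / 2) * Real.log (2 * π) - (1 / 2) * Real.log (σ2i θ)
        - (ui θ (y ω)) ^ 2 / (2 * σ2i θ)) (D ω) θ₀) ∧ Integrable D μ ∧ ∫ ω, D ω ∂μ = 0 := by
  classical
  set M : ℝ → Matrix S S ℝ := fun θ => Matrix.of fun p q : S => K θ p q with hM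
  have hMd : ∀ p q : S, Differentiable ℝ fun θ => M θ p q := fun p q => hKdiff p q
  have hMpd : (M θ₀).PosDef := posdef_sub _ (hKpd θ₀) S
  have hdet0 : (M θ₀).det ≠ 0 := hMpd.det_pos.ne'
  have hAd : ∀ p q : S, DifferentiableAt ℝ (fun θ => (M θ)⁻¹ p q) θ₀ :=
    diff_inv_entry M hMd θ₀ hdet0
  set w : ℝ → S → ℝ := fun θ => (fun j : S => K θ i j) ᵥ* (M θ)⁻¹ with hwdef
  have hwd : ∀ j : S, DifferentiableAt ℝ (fun θ => w θ j) θ₀ := by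
    intro j
    have : (fun θ => w θ j) = fun θ => ∑ p : S, K θ i p * (M θ)⁻¹ p j := by
      funext θ; simp [hwdef, Matrix.vecMul, dotProduct]
    rw [this]
    exact DifferentiableAt.fun_sum fun p _ => ((hKdiff i p) θ₀).mul (hAd p j)
  set w' : S → ℝ := fun j => deriv (fun θ => w θ j) θ₀ with hw'def
  have hw : ∀ j : S, HasDerivAt (fun θ => w θ j) (w' j) θ₀ := fun j => (hwd j).hasDerivAt
  -- σ2 in terms of w
  have hσw : ∀ θ, σ2i θ = K θ i i - ∑ q : S, w θ q * K θ q i := by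
    intro θ
    rw [hσ2i, dotProduct_mulVec]
    rfl
  have hσd : DifferentiableAt ℝ σ2i θ₀ := by
    have : σ2i = fun θ => K θ i i - ∑ q : S, w θ q * K θ q i := funext hσw
    rw [this]
    exact ((hKdiff i i) θ₀).sub
      (DifferentiableAt.fun_sum fun q _ => (hwd q).mul ((hKdiff q i) θ₀))
  set s : ℝ := σ2i θ₀ with hsdef
  set s' : ℝ := deriv σ2i θ₀ with hs'def
  have hs : HasDerivAt σ2i s' θ₀ := hσd.hasDerivAt
  -- the coefficient vectors
  set x : Fin n → ℝ := fun k =>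
    (if k = i then (1 : ℝ) else 0) - (if h : k ∈ S then w θ₀ ⟨k, h⟩ else 0) with hxdef
  set x' : Fin n → ℝ := fun k =>
    (if k = i then (0 : ℝ) else 0) - (if h : k ∈ S then w' ⟨k, h⟩ else 0) with hx'def
  have ext2 : ∀ (c : ℝ) (v : S → ℝ) (z : Fin n → ℝ),
      ∑ k, ((if k = i then c else 0) - (if h : k ∈ S then v ⟨k, h⟩ else 0)) * z k
        = c * z i - ∑ j : S, v j * z j := by
    intro c v z
    have : ∀ k : Fin n, ((if k = i then c else 0) - (if h : k ∈ S then v ⟨k, h⟩ else 0)) * z k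
        = (if k = i then c * z k else 0) - (if h : k ∈ S then v ⟨k, h⟩ else 0) * z k := by
      intro k
      by_cases hk : k = i
      · subst hk; rw [if_pos rfl, if_pos rfl, dif_neg hiS]; ring
      · rw [if_neg hk, if_neg hk]; ring
    simp only [this, Finset.sum_sub_distrib, Finset.sum_ite_eq', Finset.mem_univ, if_pos,
      sum_dite_mul]
  -- the row vector r = x ᵥ* K θ₀
  have hr : ∀ l : Fin n, (x ᵥ* K θ₀) l = K θ₀ i l - ∑ j : S, w θ₀ j * K θ₀ j l := by
    intro l
    have : (x ᵥ* K θ₀) l = ∑ k, x k * K θ₀ k l := by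
      simp [Matrix.vecMul, dotProduct]
    rw [this, hxdef]
    simpa using ext2 1 (w θ₀) (fun k => K θ₀ k l)
  have hrS : ∀ j : S, (x ᵥ* K θ₀) j = 0 := by
    intro j
    rw [hr]
    have hvm : (w θ₀) ᵥ* (M θ₀) = fun j : S => K θ₀ i j := by
      rw [hwdef, Matrix.vecMul_vecMul, Matrix.nonsing_inv_mul _ (isUnit_iff_ne_zero.mpr hdet0),
        Matrix.vecMul_one]
    have : ∑ p : S, w θ₀ p * K θ₀ p j = ((w θ₀) ᵥ* (M θ₀)) j := by
      simp [Matrix.vecMul, dotProduct, hM]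
    rw [this, hvm]
    ring
  have hri : (x ᵥ* K θ₀) i = s := by rw [hr, hsdef, hσw θ₀]
  -- positivity of s
  have hxi : x i = 1 := by simp [hxdef, dif_neg hiS]
  have hxS : ∀ (l : Fin n) (h : l ∈ S), x l = -(w θ₀ ⟨l, h⟩) := by
    intro l h
    have hli : l ≠ i := fun hc => hiS (hc ▸ h)
    simp [hxdef, hli, dif_pos h]
  have hxO : ∀ l : Fin n, l ≠ i → l ∉ S → x l = 0 := by
    intro l h1 h2; simp [hxdef, h1, dif_neg h2]
  have hquad : ∀ v : Fin n → ℝ, x ⬝ᵥ (K θ₀ *ᵥ v) = ∑ l, (x ᵥ* K θ₀) l * v l := by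
    intro v
    rw [dotProduct_mulVec]
    rfl
  have hqx : x ⬝ᵥ (K θ₀ *ᵥ x) = s := by
    rw [hquad]
    have : ∀ l : Fin n, (x ᵥ* K θ₀) l * x l = if l = i then s else 0 := by
      intro l
      by_cases hl : l = i
      · subst hl; rw [hri, hxi, mul_one, if_pos rfl]
      · rw [if_neg hl]
        by_cases hlS : l ∈ S
        · rw [hrS ⟨l, hlS⟩, zero_mul]
        · rw [hxO l hl hlS, mul_zero]
    simp only [this, Finset.sum_ite_eq', Finset.mem_univ, if_pos]
  have hxne : x ≠ 0 := by
    intro hc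
    have := congrFun hc i
    rw [hxi] at this
    simpa using this
  have hspos : 0 < s := by
    have := (Matrix.posDef_iff_dotProduct_mulVec.mp (hKpd θ₀)).2 hxne
    rwa [star_trivial, hqx] at this
  -- x' kills r
  have hx'S : ∀ (l : Fin n) (h : l ∈ S), x' l = -(w' ⟨l, h⟩) := by
    intro l h
    have hli : l ≠ i := fun hc => hiS (hc ▸ h)
    simp [hx'def, hli, dif_pos h]
  have hx'O : ∀ l : Fin n, l ∉ S → x' l = 0 := by
    intro l h2; simp [hx'def, dif_neg h2]
  have hqx' : x ⬝ᵥ (K θ₀ *ᵥ x') = 0 := by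
    rw [hquad]
    apply Finset.sum_eq_zero
    intro l _
    by_cases hlS : l ∈ S
    · rw [hrS ⟨l, hlS⟩, zero_mul]
    · rw [hx'O l hlS, mul_zero]
  -- u in terms of w and x
  have hux : ∀ θ z, ui θ z = z i - ∑ j : S, w θ j * z j := by
    intro θ z
    rw [hui, dotProduct_mulVec]
    rfl
  have hu0 : ∀ z : Fin n → ℝ, ui θ₀ z = x ⬝ᵥ z := by
    intro z
    rw [hux]
    rw [dotProduct]
    rw [hxdef]
    rw [ext2 1 (w θ₀) z]
    ring
  have hU'0 : ∀ z : Fin n → ℝ, x' ⬝ᵥ z = 0 - ∑ j : S, w' j * z j := by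
    intro z
    rw [dotProduct, hx'def, ext2 0 w' z]
    ring
  -- derivative of u in θ
  have hU : ∀ z : Fin n → ℝ, HasDerivAt (fun θ => ui θ z) (x' ⬝ᵥ z) θ₀ := by
    intro z
    have he : (fun θ => ui θ z) = fun θ => z i - ∑ j : S, w θ j * z j :=
      funext fun θ => hux θ z
    rw [he, hU'0 z]
    exact (hasDerivAt_const θ₀ (z i)).sub (HasDerivAt.fun_sum fun j _ => (hw j).mul_const (z j))
  -- assemble
  set D : Ω → ℝ := fun ω => 0 - 1 / 2 * (s' / s) -
    ((2 : ℕ) * (x ⬝ᵥ y ω) ^ 1 * (x' ⬝ᵥ y ω) * (2 * s) - (x ⬝ᵥ y ω) ^ 2 * (2 * s')) / (2 * s) ^ 2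
    with hDdef
  refine ⟨D, ?_, ?_, ?_⟩
  · intro ω
    have h1 : HasDerivAt (fun θ => 1 / 2 * Real.log (σ2i θ)) (1 / 2 * (s' / s)) θ₀ :=
      (hs.log hspos.ne').const_mul (1 / 2)
    have h2 : HasDerivAt (fun θ => (ui θ (y ω)) ^ 2)
        ((2 : ℕ) * (ui θ₀ (y ω)) ^ 1 * (x' ⬝ᵥ y ω)) θ₀ := (hU (y ω)).pow 2
    have h3 : HasDerivAt (fun θ => 2 * σ2i θ) (2 * s') θ₀ := hs.const_mul 2
    have h4 := h2.div h3 (by positivity)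
    have h0 : HasDerivAt (fun _ : ℝ => -(1 / 2) * Real.log (2 * π)) 0 θ₀ := hasDerivAt_const _ _
    have := (h0.sub h1).sub h4
    rw [hu0 (y ω)] at this
    convert this using 2
    all_goals rfl
  · have hmom := (moment_lemma μ (K θ₀) y hint2 hcov x x').1
    have hmom2 := (moment_lemma μ (K θ₀) y hint2 hcov x x).1
    have hDeq : D = fun ω => (0 - 1 / 2 * (s' / s)) -
        ((2 * (2 * s)) * ((x ⬝ᵥ y ω) * (x' ⬝ᵥ y ω)) - (2 * s') * ((x ⬝ᵥ y ω) * (x ⬝ᵥ y ω)))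
          / (2 * s) ^ 2 := by
      funext ω; rw [hDdef]; push_cast; ring
    have hI1 : Integrable (fun ω => 2 * (2 * s) * (x ⬝ᵥ y ω * x' ⬝ᵥ y ω)) μ := hmom.const_mul _
    have hI2 : Integrable (fun ω => 2 * s' * (x ⬝ᵥ y ω * x ⬝ᵥ y ω)) μ := hmom2.const_mul _
    have hI3 : Integrable (fun ω => (2 * (2 * s) * (x ⬝ᵥ y ω * x' ⬝ᵥ y ω)
        - 2 * s' * (x ⬝ᵥ y ω * x ⬝ᵥ y ω)) / (2 * s) ^ 2) μ := (hI1.sub hI2).div_const _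
    rw [hDeq]
    exact (integrable_const _).sub hI3
  · have hmom := moment_lemma μ (K θ₀) y hint2 hcov x x'
    have hmom2 := moment_lemma μ (K θ₀) y hint2 hcov x x
    have hDeq : D = fun ω => (0 - 1 / 2 * (s' / s)) -
        ((2 * (2 * s)) * ((x ⬝ᵥ y ω) * (x' ⬝ᵥ y ω)) - (2 * s') * ((x ⬝ᵥ y ω) * (x ⬝ᵥ y ω)))
          / (2 * s) ^ 2 := by
      funext ω; rw [hDdef]; push_cast; ring
    have hI1 : Integrable (fun ω => 2 * (2 * s) * (x ⬝ᵥ y ω * x' ⬝ᵥ y ω)) μ := hmom.1.const_mul _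
    have hI2 : Integrable (fun ω => 2 * s' * (x ⬝ᵥ y ω * x ⬝ᵥ y ω)) μ := hmom2.1.const_mul _
    have hI3 : Integrable (fun ω => (2 * (2 * s) * (x ⬝ᵥ y ω * x' ⬝ᵥ y ω)
        - 2 * s' * (x ⬝ᵥ y ω * x ⬝ᵥ y ω)) / (2 * s) ^ 2) μ := (hI1.sub hI2).div_const _
    simp only [hDeq]
    rw [integral_sub (integrable_const _) hI3]
    rw [integral_div, integral_sub hI1 hI2,
      integral_const_mul, integral_const_mul, hmom.2, hmom2.2, hqx', hqx, integral_const]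
    simp only [probReal_univ, measure_univ, ENNReal.toReal_one, smul_eq_mul, one_mul]
    field_simp
    ring


/-- The Vecchia score function is unbiased. For a family `θ ↦ K(θ)` of
positive-definite covariance matrices depending differentiably on a scalar parameter,
with conditioning sets `g(i) ⊆ {1,...,i-1}`, the Vecchia log-likelihood is
`ℓ̂(y;θ) = Σᵢ [-(1/2)log(2π) - (1/2)log σ²_{i|g(i)}(θ) - u_{i|g(i)}(θ,y)²/(2σ²_{i|g(i)}(θ))]`,
and `E_θ₀[∂ℓ̂(y;θ)/∂θ |_{θ=θ₀}] = 0` under `y ~ N(0, K(θ₀))` (encoded by its first and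
second moments). -/
theorem vecchia_score_unbiased
    {Ω : Type*} [MeasurableSpace Ω] (μ : Measure Ω) [IsProbabilityMeasure μ]
    {n : ℕ} (K : ℝ → Matrix (Fin n) (Fin n) ℝ)
    (hKsym : ∀ θ, (K θ).IsSymm) (hKpd : ∀ θ, (K θ).PosDef)
    (hKdiff : ∀ i j, Differentiable ℝ (fun θ => K θ i j))
    (g : Fin n → Finset (Fin n)) (hg : ∀ i, ∀ j ∈ g i, j < i)
    (θ₀ : ℝ)
    (y : Ω → Fin n → ℝ) (hy : Measurable y)
    (hint1 : ∀ i, Integrable (fun ω => y ω i) μ)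
    (hint2 : ∀ i j, Integrable (fun ω => y ω i * y ω j) μ)
    (hmean : ∀ i, ∫ ω, y ω i ∂μ = 0)
    (hcov : ∀ i j, ∫ ω, y ω i * y ω j ∂μ = K θ₀ i j)
    -- conditional variances and residuals of the Vecchia factors
    (σ2 : ℝ → Fin n → ℝ)
    (hσ2 : ∀ θ i, σ2 θ i = K θ i i -
      (fun j : g i => K θ i j) ⬝ᵥ ((Matrix.of fun p q : g i => K θ p q)⁻¹ *ᵥ fun j : g i => K θ j i))
    (u : ℝ → Fin n → (Fin n → ℝ) → ℝ)
    (hu : ∀ θ i z, u θ i z = z i -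
      (fun j : g i => K θ i j) ⬝ᵥ ((Matrix.of fun p q : g i => K θ p q)⁻¹ *ᵥ fun j : g i => z j))
    -- the Vecchia log-likelihood
    (ℓ : (Fin n → ℝ) → ℝ → ℝ)
    (hℓ : ∀ z θ, ℓ z θ = ∑ i : Fin n,
      (-(1 / 2) * Real.log (2 * π) - (1 / 2) * Real.log (σ2 θ i) - (u θ i z) ^ 2 / (2 * σ2 θ i))) :
    ∫ ω, deriv (fun θ => ℓ (y ω) θ) θ₀ ∂μ = 0 := by
  classical
  have hex : ∀ i : Fin n, ∃ D : Ω → ℝ,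
      (∀ ω, HasDerivAt (fun θ => -(1 / 2) * Real.log (2 * π) - (1 / 2) * Real.log (σ2 θ i)
        - (u θ i (y ω)) ^ 2 / (2 * σ2 θ i)) (D ω) θ₀) ∧ Integrable D μ ∧ ∫ ω, D ω ∂μ = 0 := by
    intro i
    exact vecchia_term μ K hKpd hKdiff θ₀ y hint2 hcov i (g i)
      (fun h => lt_irrefl i (hg i i h)) (fun θ => σ2 θ i) (fun θ => hσ2 θ i)
      (fun θ z => u θ i z) (fun θ z => hu θ i z)
  choose D hD hDint hDzero using hex
  have hderiv : ∀ ω, deriv (fun θ => ℓ (y ω) θ) θ₀ = ∑ i : Fin n, D i ω := by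
    intro ω
    have he : (fun θ => ℓ (y ω) θ) = fun θ => ∑ i : Fin n,
        (-(1 / 2) * Real.log (2 * π) - (1 / 2) * Real.log (σ2 θ i)
          - (u θ i (y ω)) ^ 2 / (2 * σ2 θ i)) := funext fun θ => hℓ (y ω) θ
    have : HasDerivAt (fun θ => ℓ (y ω) θ) (∑ i : Fin n, D i ω) θ₀ := by
      rw [he]
      exact HasDerivAt.fun_sum fun i _ => hD i ω
    exact this.deriv
  calc ∫ ω, deriv (fun θ => ℓ (y ω) θ) θ₀ ∂μ = ∫ ω, ∑ i : Fin n, D i ω ∂μ := by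
        exact integral_congr_ae (Filter.Eventually.of_forall hderiv)
    _ = ∑ i : Fin n, ∫ ω, D i ω ∂μ := integral_finset_sum _ fun i _ => hDint i
    _ = 0 := by simp [hDzero]
end

section
/- Saddle-point/duality characterization of the shorted operator in finite dimensions: let G be a symmetric positive-definite n×n matrix with inverse L, let S ⊆ ℝ^n be a linear subspace, and let φ ∈ ℝ^n. Then inf_{ψ ∈ S} (φ + ψ)ᵀ G (φ + ψ) / 2 = sup_{u ∈ S⊥_L} ( φᵀ u - uᵀ L u / 2 ), where S⊥_L := { u ∈ ℝ^n : ψᵀ u = 0 for all ψ ∈ S } is the annihilator of S (under the Euclidean pairing). -/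
open Matrix

/-- Saddle-point/duality characterization of the shorted operator in finite
dimensions. For `G` symmetric positive definite with inverse `L`, a subspace `S ⊆ ℝⁿ` and
`φ ∈ ℝⁿ`:
`inf_{ψ ∈ S} (φ+ψ)ᵀ G (φ+ψ)/2 = sup_{u ∈ S⊥} (φᵀu - uᵀ L u / 2)`,
where `S⊥ = {u : ψᵀu = 0 ∀ ψ ∈ S}` is the annihilator of `S` under the Euclidean pairing. -/
theorem shorted_operator_duality
    {n : ℕ} (G : Matrix (Fin n) (Fin n) ℝ) (hGsym : G.IsSymm) (hGpd : G.PosDef)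
    (L : Matrix (Fin n) (Fin n) ℝ) (hL : L = G⁻¹)
    (S : Submodule ℝ (Fin n → ℝ)) (φ : Fin n → ℝ) :
    sInf { r : ℝ | ∃ ψ ∈ S, r = (φ + ψ) ⬝ᵥ (G *ᵥ (φ + ψ)) / 2 }
      = sSup { r : ℝ | ∃ u : Fin n → ℝ, (∀ ψ ∈ S, ψ ⬝ᵥ u = 0) ∧
          r = φ ⬝ᵥ u - u ⬝ᵥ (L *ᵥ u) / 2 } := by
  have hdet : IsUnit G.det := isUnit_iff_ne_zero.mpr hGpd.det_pos.ne'
  have hGL : G * L = 1 := by rw [hL]; exact Matrix.mul_nonsing_inv G hdet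
  have hLG : L * G = 1 := by rw [hL]; exact Matrix.nonsing_inv_mul G hdet
  -- symmetry of the quadratic forms
  have hsymG : ∀ v w : Fin n → ℝ, v ⬝ᵥ (G *ᵥ w) = w ⬝ᵥ (G *ᵥ v) := by
    intro v w
    nth_rewrite 2 [← hGsym]
    rw [Matrix.mulVec_transpose, Matrix.dotProduct_mulVec, dotProduct_comm]
  -- positive (semi)definiteness of the quadratic form
  have hpos : ∀ x : Fin n → ℝ, x ≠ 0 → 0 < x ⬝ᵥ (G *ᵥ x) := by
    intro x hx
    simpa using hGpd.dotProduct_mulVec_pos hx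
  have hnonneg : ∀ x : Fin n → ℝ, 0 ≤ x ⬝ᵥ (G *ᵥ x) := by
    intro x
    by_cases hx : x = 0
    · simp [hx]
    · exact (hpos x hx).le
  -- the key inequality (weak duality pointwise)
  have key : ∀ x u : Fin n → ℝ,
      x ⬝ᵥ u - u ⬝ᵥ (L *ᵥ u) / 2 ≤ x ⬝ᵥ (G *ᵥ x) / 2 := by
    intro x u
    set y := L *ᵥ u with hy
    have hGy : G *ᵥ y = u := by
      rw [hy, Matrix.mulVec_mulVec, hGL, Matrix.one_mulVec]
    have h0 := hnonneg (x - y)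
    have hexp : (x - y) ⬝ᵥ (G *ᵥ (x - y))
        = x ⬝ᵥ (G *ᵥ x) - 2 * (x ⬝ᵥ u) + u ⬝ᵥ (L *ᵥ u) := by
      have h1 : x ⬝ᵥ (G *ᵥ y) = x ⬝ᵥ u := by rw [hGy]
      have h2 : y ⬝ᵥ (G *ᵥ x) = x ⬝ᵥ u := by rw [hsymG, hGy]
      have h3 : y ⬝ᵥ (G *ᵥ y) = u ⬝ᵥ (L *ᵥ u) := by
        rw [hGy, ← hy, dotProduct_comm]
      rw [Matrix.mulVec_sub, dotProduct_sub, sub_dotProduct, sub_dotProduct,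
        h1, h2, h3]
      ring
    rw [hexp] at h0
    linarith
  -- existence of the minimizer: decompose φ along S and its G-orthogonal
  set B : LinearMap.BilinForm ℝ (Fin n → ℝ) := Matrix.toBilin' G with hB
  have hBapp : ∀ v w, B v w = v ⬝ᵥ (G *ᵥ w) := fun v w => Matrix.toBilin'_apply' G v w
  have hBrefl : B.IsRefl := by
    intro v w h
    rw [hBapp] at h ⊢
    rw [hsymG]; exact h
  have hnd : (B.restrict S).Nondegenerate := by
    suffices hsl : (B.restrict S).SeparatingLeft from
      ⟨hsl, fun x hx => hsl x fun y => hBrefl _ _ (hx y)⟩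
    intro x hx
    have h := hx x
    simp only [LinearMap.BilinForm.restrict_apply, LinearMap.domRestrict_apply, hBapp] at h
    by_contra hx0
    have : (x : Fin n → ℝ) ≠ 0 := fun h0 => hx0 (Subtype.ext h0)
    exact (hpos x this).ne' h
  have hcompl := LinearMap.BilinForm.isCompl_orthogonal_of_restrict_nondegenerate
    (B := B) (W := S) hBrefl hnd
  have hφ : φ ∈ S ⊔ B.orthogonal S := by
    rw [hcompl.sup_eq_top]; trivial
  obtain ⟨s, hs, w, hw, hsw⟩ := Submodule.mem_sup.mp hφ
  have hworth : ∀ ψ ∈ S, ψ ⬝ᵥ (G *ᵥ w) = 0 := by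
    intro ψ hψ
    have := (LinearMap.BilinForm.mem_orthogonal_iff.mp hw) ψ hψ
    rwa [hBapp] at this
  set u₀ : Fin n → ℝ := G *ᵥ w with hu₀
  have hLu₀ : L *ᵥ u₀ = w := by
    rw [hu₀, Matrix.mulVec_mulVec, hLG, Matrix.one_mulVec]
  set v : ℝ := w ⬝ᵥ (G *ᵥ w) / 2 with hv
  -- v is the least element of the LHS set
  have hleast : IsLeast { r : ℝ | ∃ ψ ∈ S, r = (φ + ψ) ⬝ᵥ (G *ᵥ (φ + ψ)) / 2 } v := by
    constructor
    · refine ⟨-s, S.neg_mem hs, ?_⟩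
      have : φ + -s = w := by rw [← hsw]; abel
      rw [this]
    · rintro r ⟨ψ, hψ, rfl⟩
      have h1 := key (φ + ψ) u₀
      have h2 : (φ + ψ) ⬝ᵥ u₀ = φ ⬝ᵥ u₀ := by
        rw [add_dotProduct, hworth ψ hψ, add_zero]
      have h3 : φ ⬝ᵥ u₀ = w ⬝ᵥ u₀ := by
        rw [← hsw, add_dotProduct, hworth s hs, zero_add]
      have h4 : u₀ ⬝ᵥ (L *ᵥ u₀) = w ⬝ᵥ (G *ᵥ w) := by
        rw [hLu₀, hu₀, dotProduct_comm]
      have h5 : w ⬝ᵥ u₀ = w ⬝ᵥ (G *ᵥ w) := by rw [hu₀]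
      rw [h2, h3, h4, h5] at h1
      rw [hv]; linarith
  -- v is the greatest element of the RHS set
  have hgreat : IsGreatest { r : ℝ | ∃ u : Fin n → ℝ, (∀ ψ ∈ S, ψ ⬝ᵥ u = 0) ∧
      r = φ ⬝ᵥ u - u ⬝ᵥ (L *ᵥ u) / 2 } v := by
    constructor
    · refine ⟨u₀, hworth, ?_⟩
      have h3 : φ ⬝ᵥ u₀ = w ⬝ᵥ (G *ᵥ w) := by
        rw [← hsw, add_dotProduct, hworth s hs, zero_add, hu₀]
      have h4 : u₀ ⬝ᵥ (L *ᵥ u₀) = w ⬝ᵥ (G *ᵥ w) := by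
        rw [hLu₀, hu₀, dotProduct_comm]
      rw [h3, h4, hv]; ring
    · rintro r ⟨u, hu, rfl⟩
      have h1 := key w u
      have h2 : φ ⬝ᵥ u = w ⬝ᵥ u := by
        rw [← hsw, add_dotProduct, hu s hs, zero_add]
      rw [h2, hv]; linarith
  rw [hleast.csInf_eq, hgreat.csSup_eq]
end
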